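/- arXiv:2208.11841 — 4 statements merged into one kernel-verified Lean document; each statement's English description precedes it below -/
import Mathlib

section
/- Let (T, N, S) be an O-N structure on a pre-Malcev algebra A with bimodule (V; ℓ, 𝔯). If T is invertible, then (T, N, S) is an O-dual-N structure on A; in particular, the Nijenhuis pair (N, S) is then a dual-Nijenhuis pair. -/
open TensorProduct

section Defs

variable {F : Type*} [Field F]
variable {A : Type*} [AddCommGroup A] [Module F A]
variable {V : Type*} [AddCommGroup V] [Module F V]

/-- The pre-Malcev identity for a (curried) bilinear product. -/
def PreMalcevFn {A : Type*} [AddCommGroup A] (mul : A → A → A) : Prop :=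
  ∀ x y z t : A,
    mul (mul y z) (mul x t) - mul (mul z y) (mul x t)
      + mul (mul (mul x y) z) t - mul (mul (mul y x) z) t
      - mul (mul z (mul x y)) t + mul (mul z (mul y x)) t
      + mul y (mul (mul x z) t) - mul y (mul (mul z x) t)
      - mul x (mul y (mul z t)) + mul z (mul x (mul y t)) = 0

/-- The semidirect-product multiplication on `A × V`. -/
def sdFn (mul : A →ₗ[F] A →ₗ[F] A) (l r : A →ₗ[F] Module.End F V) :
    A × V → A × V → A × V :=
  fun p q => (mul p.1 q.1, l p.1 q.2 + r q.1 p.2)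

/-- `(V; l, r)` is a bimodule of the pre-Malcev algebra `(A, mul)` iff the semidirect
product `A ⋉ V` is again a pre-Malcev algebra. -/
def IsBimodule (mul : A →ₗ[F] A →ₗ[F] A) (l r : A →ₗ[F] Module.End F V) : Prop :=
  PreMalcevFn (sdFn mul l r)

/-- `T` is an O-operator of `(A, mul)` associated to the bimodule `(V; l, r)`. -/
def IsOOp (mul : A →ₗ[F] A →ₗ[F] A) (l r : A →ₗ[F] Module.End F V)
    (T : V →ₗ[F] A) : Prop :=
  ∀ v w : V, mul (T v) (T w) = T (l (T v) w + r (T w) v)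

/-- Two O-operators are compatible if every linear combination is again an O-operator. -/
def Compatible (mul : A →ₗ[F] A →ₗ[F] A) (l r : A →ₗ[F] Module.End F V)
    (T₁ T₂ : V →ₗ[F] A) : Prop :=
  ∀ k₁ k₂ : F, IsOOp mul l r (k₁ • T₁ + k₂ • T₂)

/-- `N` is a Nijenhuis operator for the product `mul`. -/
def IsNijenhuisFn (mul : A → A → A) (N : A →ₗ[F] A) : Prop :=
  ∀ x y : A, mul (N x) (N y) = N (mul (N x) y + mul x (N y) - N (mul x y))

/-- The dual map `ℓ* : A → End(V*)`, `⟨ℓ*_x ξ, v⟩ = -⟨ξ, ℓ_x v⟩`. -/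
def dualRep (l : A →ₗ[F] Module.End F V) :
    A →ₗ[F] Module.End F (Module.Dual F V) where
  toFun x := -(l x).dualMap
  map_add' x y := by ext ξ v; simp; abel
  map_smul' c x := by ext ξ v; simp

/-- The map `ℓ* - 𝔯* : A → End(V*)`, i.e. `x ↦ ℓ*_x - 𝔯*_x`; it is equal to
`dualRep l - dualRep r`. -/
def dualRepSub (l r : A →ₗ[F] Module.End F V) :
    A →ₗ[F] Module.End F (Module.Dual F V) where
  toFun x := -(l x).dualMap - -((r x).dualMap)
  map_add' x y := by ext ξ v; simp; abel
  map_smul' c x := by ext ξ v; simp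

/-- The map `-𝔯* : A → End(V*)`, i.e. `x ↦ -(𝔯*_x)`; it is equal to `-(dualRep r)`. -/
def dualRepNeg (r : A →ₗ[F] Module.End F V) :
    A →ₗ[F] Module.End F (Module.Dual F V) where
  toFun x := -(-((r x).dualMap))
  map_add' x y := by ext ξ v; simp
  map_smul' c x := by ext ξ v; simp

/-- The semidirect-product multiplication as a bundled bilinear map. -/
def sdMul (mul : A →ₗ[F] A →ₗ[F] A) (l r : A →ₗ[F] Module.End F V) :
    (A × V) →ₗ[F] (A × V) →ₗ[F] (A × V) :=
  LinearMap.mk₂ F (sdFn mul l r)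
    (fun p p' q => by
      apply Prod.ext <;> simp [sdFn, map_add] <;> abel)
    (fun c p q => by
      apply Prod.ext <;> simp [sdFn, map_smul, smul_add])
    (fun p q q' => by
      apply Prod.ext <;> simp [sdFn, map_add] <;> abel)
    (fun c p q => by
      apply Prod.ext <;> simp [sdFn, map_smul, smul_add])

/-- The left-hand side `-r₁₂·r₁₃ + r₁₂·r₂₃ + [r₁₃, r₂₃]` of the analogue of the
classical Yang-Baxter equation on a pre-Malcev algebra `(B, mul)`. -/
noncomputable def cybeLHS {B : Type*} [AddCommGroup B] [Module F B]
    (mul : B →ₗ[F] B →ₗ[F] B) (r : B ⊗[F] B) : B ⊗[F] (B ⊗[F] B) :=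
  -(TensorProduct.map (TensorProduct.lift mul) LinearMap.id
      (TensorProduct.tensorTensorTensorComm F B B B B (r ⊗ₜ[F] r)))
  + TensorProduct.map LinearMap.id (TensorProduct.map (TensorProduct.lift mul) LinearMap.id)
      (TensorProduct.map LinearMap.id (TensorProduct.assoc F B B B).symm.toLinearMap
        (TensorProduct.assoc F B B (B ⊗[F] B) (r ⊗ₜ[F] r)))
  + TensorProduct.map LinearMap.id (TensorProduct.map LinearMap.id
      (TensorProduct.lift mul - TensorProduct.lift mul ∘ₗ (TensorProduct.comm F B B).toLinearMap))
      (TensorProduct.assoc F B B (B ⊗[F] B)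
        (TensorProduct.tensorTensorTensorComm F B B B B (r ⊗ₜ[F] r)))

/-- `r` is a solution of the analogue of the CYBE on `(B, mul)`. -/
noncomputable def IsCYBE {B : Type*} [AddCommGroup B] [Module F B]
    (mul : B →ₗ[F] B →ₗ[F] B) (r : B ⊗[F] B) : Prop :=
  cybeLHS mul r = 0

/-- The linear map `T_r : A* → A` associated to `r ∈ A ⊗ A`,
`⟨f, T_r g⟩ = ⟨f ⊗ g, r⟩`. -/
noncomputable def trMap (r : A ⊗[F] A) : Module.Dual F A →ₗ[F] A :=
  dualTensorHom F (Module.Dual F A) A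
    (TensorProduct.map (Module.Dual.eval F A) LinearMap.id
      (TensorProduct.comm F A A r))

/-- The product `⋄^T` on `V` induced by a linear map `T : V → A`. -/
def dia (l r : A →ₗ[F] Module.End F V) (T : V →ₗ[F] A) : V → V → V :=
  fun u v => l (T u) v + r (T v) u

/-- The deformation `⋄^T_S` of `⋄^T` by `S`. -/
def diaS (l r : A →ₗ[F] Module.End F V) (T : V →ₗ[F] A) (S : V →ₗ[F] V) : V → V → V :=
  fun u v => dia l r T (S u) v + dia l r T u (S v) - S (dia l r T u v)

/-- `(N, S)` is a Nijenhuis pair on `(A, mul)` with bimodule `(V; l, r)`. -/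
def IsNijPair (mul : A →ₗ[F] A →ₗ[F] A) (l r : A →ₗ[F] Module.End F V)
    (N : A →ₗ[F] A) (S : V →ₗ[F] V) : Prop :=
  IsNijenhuisFn (fun x y => mul x y) N ∧
  (∀ (x : A) (v : V), l (N x) (S v) = S (l (N x) v + l x (S v) - S (l x v))) ∧
  (∀ (x : A) (v : V), r (N x) (S v) = S (r (N x) v + r x (S v) - S (r x v)))

/-- `(N, S)` is a dual-Nijenhuis pair on `(A, mul)` with bimodule `(V; l, r)`. -/
def IsDualNijPair (mul : A →ₗ[F] A →ₗ[F] A) (l r : A →ₗ[F] Module.End F V)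
    (N : A →ₗ[F] A) (S : V →ₗ[F] V) : Prop :=
  IsNijenhuisFn (fun x y => mul x y) N ∧
  (∀ (x : A) (v : V), l (N x) (S v) = S (l (N x) v) + l x (S (S v)) - S (l x (S v))) ∧
  (∀ (x : A) (v : V), r (N x) (S v) = S (r (N x) v) + r x (S (S v)) - S (r x (S v)))

/-- `(N, S)` is a perfect Nijenhuis pair. -/
def IsPerfectNijPair (mul : A →ₗ[F] A →ₗ[F] A) (l r : A →ₗ[F] Module.End F V)
    (N : A →ₗ[F] A) (S : V →ₗ[F] V) : Prop :=
  IsNijPair mul l r N S ∧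
  (∀ (x : A) (v : V), S (S (l x v)) + l x (S (S v)) = (2 : F) • S (l x (S v))) ∧
  (∀ (x : A) (v : V), S (S (r x v)) + r x (S (S v)) = (2 : F) • S (r x (S v)))

/-- `(T, N, S)` is an O-N structure on `(A, mul)` with bimodule `(V; l, r)`. -/
def IsONStruct (mul : A →ₗ[F] A →ₗ[F] A) (l r : A →ₗ[F] Module.End F V)
    (T : V →ₗ[F] A) (N : A →ₗ[F] A) (S : V →ₗ[F] V) : Prop :=
  IsOOp mul l r T ∧ IsNijPair mul l r N S ∧ N ∘ₗ T = T ∘ₗ S ∧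
  ∀ u v : V, dia l r (N ∘ₗ T) u v = diaS l r T S u v

/-- `(T, N, S)` is an O-dual-N structure on `(A, mul)` with bimodule `(V; l, r)`. -/
def IsODualNStruct (mul : A →ₗ[F] A →ₗ[F] A) (l r : A →ₗ[F] Module.End F V)
    (T : V →ₗ[F] A) (N : A →ₗ[F] A) (S : V →ₗ[F] V) : Prop :=
  IsOOp mul l r T ∧ IsDualNijPair mul l r N S ∧ N ∘ₗ T = T ∘ₗ S ∧
  ∀ u v : V, dia l r (N ∘ₗ T) u v = diaS l r T S u v

end Defs

/-- if `(T, N, S)` is an O-N structure with `T` invertible, then it is an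
O-dual-N structure; in particular `(N, S)` is a dual-Nijenhuis pair. -/
theorem stmt15 {F A V : Type*} [Field F] [CharZero F]
    [AddCommGroup A] [Module F A] [AddCommGroup V] [Module F V]
    (mul : A →ₗ[F] A →ₗ[F] A) (hA : PreMalcevFn fun x y => mul x y)
    (l r : A →ₗ[F] Module.End F V) (hbim : IsBimodule mul l r)
    (T : V →ₗ[F] A) (N : A →ₗ[F] A) (S : V →ₗ[F] V)
    (h : IsONStruct mul l r T N S) (hT : Function.Bijective T) :
    IsODualNStruct mul l r T N S ∧ IsDualNijPair mul l r N S := by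
  obtain ⟨hO, ⟨hN, hl, hr⟩, hNT, hdia⟩ := h
  have hNT' : ∀ w : V, N (T w) = T (S w) := fun w => LinearMap.congr_fun hNT w
  have star : ∀ u v : V, l (T u) (S v) + r (T v) (S u)
      = S (l (T u) v) + S (r (T v) u) := by
    intro u v
    have h1 := hdia u v
    simp only [dia, diaS, LinearMap.comp_apply, hNT', map_add, map_sub] at h1
    linear_combination (norm := abel1) -h1
  have starS : ∀ u v : V, S (l (T u) (S v)) + S (r (T v) (S u))
      = S (S (l (T u) v)) + S (S (r (T v) u)) := by
    intro u v
    have h2 := congrArg S (star u v)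
    simpa only [map_add] using h2
  have hl' : ∀ u v : V, l (T (S u)) (S v)
      = S (l (T (S u)) v) + S (l (T u) (S v)) - S (S (l (T u) v)) := by
    intro u v
    have h2 := hl (T u) v
    simpa only [hNT', map_add, map_sub] using h2
  have hr' : ∀ u v : V, r (T (S v)) (S u)
      = S (r (T (S v)) u) + S (r (T v) (S u)) - S (S (r (T v) u)) := by
    intro u v
    have h2 := hr (T v) u
    simpa only [hNT', map_add, map_sub] using h2
  have dualL : ∀ (x : A) (v : V), l (N x) (S v)
      = S (l (N x) v) + l x (S (S v)) - S (l x (S v)) := by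
    intro x v
    obtain ⟨u, rfl⟩ := hT.2 x
    rw [hNT' u]
    have e2 := star u (S v)
    have e1s := starS u v
    linear_combination (norm := abel1) hl' u v - e2 + hr' u v + e1s
  have dualR : ∀ (x : A) (v : V), r (N x) (S v)
      = S (r (N x) v) + r x (S (S v)) - S (r x (S v)) := by
    intro x u
    obtain ⟨v, rfl⟩ := hT.2 x
    rw [hNT' v]
    have e2 := star (S u) v
    have e1s := starS u v
    linear_combination (norm := abel1) hr' u v - e2 + hl' u v + e1s
  exact ⟨⟨hO, ⟨hN, dualL, dualR⟩, hNT, hdia⟩, ⟨hN, dualL, dualR⟩⟩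
end

section
/- Let T₁, T₂ : V → A be O-operators of a pre-Malcev algebra A associated to a bimodule (V; ℓ, 𝔯), and suppose T₂ is invertible. If T₁ and T₂ are compatible, then N = T₁ ∘ T₂^{-1} : A → A is a Nijenhuis operator on A. -/
open TensorProduct

/-- if `T₁, T₂` are compatible O-operators and `T₂` is invertible, then
`N = T₁ ∘ T₂⁻¹` is a Nijenhuis operator on `A`. -/
theorem stmt17 {F A V : Type*} [Field F] [CharZero F]
    [AddCommGroup A] [Module F A] [AddCommGroup V] [Module F V]
    (mul : A →ₗ[F] A →ₗ[F] A) (hA : PreMalcevFn fun x y => mul x y)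
    (l r : A →ₗ[F] Module.End F V) (hbim : IsBimodule mul l r)
    (T₁ : V →ₗ[F] A) (T₂ : V ≃ₗ[F] A)
    (h₁ : IsOOp mul l r T₁) (h₂ : IsOOp mul l r T₂.toLinearMap)
    (hcomp : Compatible mul l r T₁ T₂.toLinearMap) :
    IsNijenhuisFn (fun x y => mul x y) (T₁ ∘ₗ T₂.symm.toLinearMap) := by
  have cross : ∀ v w : V,
      mul (T₁ v) (T₂ w) + mul (T₂ v) (T₁ w)
        = T₁ (l (T₂ v) w + r (T₂ w) v) + T₂ (l (T₁ v) w + r (T₁ w) v) := by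
    intro v w
    have h := hcomp 1 1 v w
    have e1 := h₁ v w
    have e2 := h₂ v w
    simp only [LinearMap.add_apply, LinearMap.smul_apply, one_smul, map_add,
      LinearEquiv.coe_coe] at h e1 e2 ⊢
    have hz : mul (T₁ v) (T₂ w) + mul (T₂ v) (T₁ w)
        - (T₁ (l (T₂ v) w) + T₁ (r (T₂ w) v) + (T₂ (l (T₁ v) w) + T₂ (r (T₁ w) v)))
        = (mul (T₁ v) (T₁ w) + mul (T₁ v) (T₂ w)
            + (mul (T₂ v) (T₁ w) + mul (T₂ v) (T₂ w))
          - (T₁ (l (T₁ v) w) + T₁ (l (T₂ v) w) + (T₁ (r (T₁ w) v) + T₁ (r (T₂ w) v))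
            + (T₂ (l (T₁ v) w) + T₂ (l (T₂ v) w) + (T₂ (r (T₁ w) v) + T₂ (r (T₂ w) v)))))
        - (mul (T₁ v) (T₁ w) - (T₁ (l (T₁ v) w) + T₁ (r (T₁ w) v)))
        - (mul (T₂ v) (T₂ w) - (T₂ (l (T₂ v) w) + T₂ (r (T₂ w) v))) := by abel
    have h0 : mul (T₁ v) (T₁ w) + mul (T₁ v) (T₂ w)
        + (mul (T₂ v) (T₁ w) + mul (T₂ v) (T₂ w))
        - (T₁ (l (T₁ v) w) + T₁ (l (T₂ v) w) + (T₁ (r (T₁ w) v) + T₁ (r (T₂ w) v))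
          + (T₂ (l (T₁ v) w) + T₂ (l (T₂ v) w) + (T₂ (r (T₁ w) v) + T₂ (r (T₂ w) v))))
        = 0 := by
      rw [sub_eq_zero]
      calc mul (T₁ v) (T₁ w) + mul (T₁ v) (T₂ w)
          + (mul (T₂ v) (T₁ w) + mul (T₂ v) (T₂ w))
          = mul (T₁ v) (T₁ w) + mul (T₂ v) (T₁ w)
            + (mul (T₁ v) (T₂ w) + mul (T₂ v) (T₂ w)) := by abel
        _ = _ := by rw [h]; abel
    have h1 : mul (T₁ v) (T₁ w) - (T₁ (l (T₁ v) w) + T₁ (r (T₁ w) v)) = 0 := by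
      rw [sub_eq_zero, e1]
    have h2 : mul (T₂ v) (T₂ w) - (T₂ (l (T₂ v) w) + T₂ (r (T₂ w) v)) = 0 := by
      rw [sub_eq_zero, e2]
    rw [h0, h1, h2] at hz
    simp only [sub_zero] at hz
    exact sub_eq_zero.mp hz
  intro x y
  set v := T₂.symm x with hv
  set w := T₂.symm y with hw
  have hx : T₂ v = x := T₂.apply_symm_apply x
  have hy : T₂ w = y := T₂.apply_symm_apply y
  simp only [LinearMap.comp_apply, LinearEquiv.coe_coe, ← hv, ← hw]
  set c := l (T₂ v) w + r (T₂ w) v with hc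
  set d := l (T₁ v) w + r (T₁ w) v with hd
  have hmulxy : mul x y = T₂ c := by rw [← hx, ← hy]; exact h₂ v w
  have hNxy : T₁ (T₂.symm (mul x y)) = T₁ c := by rw [hmulxy, T₂.symm_apply_apply]
  have hcross : mul (T₁ v) y + mul x (T₁ w) = T₁ c + T₂ d := by
    rw [← hx, ← hy]; exact cross v w
  have harg : mul (T₁ v) y + mul x (T₁ w) - T₁ (T₂.symm (mul x y)) = T₂ d := by
    rw [hcross, hNxy]; abel
  rw [harg, T₂.symm_apply_apply]
  exact (h₁ v w).symm ▸ rfl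
end

section
/- Let (T, N, S) be an O-N structure or an O-dual-N structure on a pre-Malcev algebra A with bimodule (V; ℓ, 𝔯). Then T and T ∘ S are compatible O-operators of A; in particular T + T ∘ S is an O-operator. -/
open TensorProduct

/-- if `(T, N, S)` is an O-N structure or an O-dual-N structure on a
pre-Malcev algebra `A`, then `T` and `T ∘ S` are compatible O-operators; in particular
`T + T ∘ S` is an O-operator. -/
theorem stmt18 {F A V : Type*} [Field F] [CharZero F]
    [AddCommGroup A] [Module F A] [AddCommGroup V] [Module F V]
    (mul : A →ₗ[F] A →ₗ[F] A) (hA : PreMalcevFn fun x y => mul x y)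
    (l r : A →ₗ[F] Module.End F V) (hbim : IsBimodule mul l r)
    (T : V →ₗ[F] A) (N : A →ₗ[F] A) (S : V →ₗ[F] V)
    (h : IsONStruct mul l r T N S ∨ IsODualNStruct mul l r T N S) :
    Compatible mul l r T (T ∘ₗ S) ∧ IsOOp mul l r (T + T ∘ₗ S) := by
  have hT : IsOOp mul l r T := by rcases h with ⟨hT,_⟩|⟨hT,_⟩ <;> exact hT
  have hNTS : N ∘ₗ T = T ∘ₗ S := by
    rcases h with ⟨_,_,hNTS,_⟩|⟨_,_,hNTS,_⟩ <;> exact hNTS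
  have hdia : ∀ u v : V, dia l r (N ∘ₗ T) u v = diaS l r T S u v := by
    rcases h with ⟨_,_,_,hdia⟩|⟨_,_,_,hdia⟩ <;> exact hdia
  have hNT : ∀ x : V, N (T x) = T (S x) := fun x => LinearMap.congr_fun hNTS x
  have star : ∀ v w : V, S (l (T v) w + r (T w) v) = l (T v) (S w) + r (T w) (S v) := by
    intro v w
    have hd := hdia v w
    simp only [dia, diaS, LinearMap.comp_apply, hNT] at hd
    linear_combination (norm := module) hd
  have dagger : ∀ v w : V, l (T (S v)) (S w) + r (T (S w)) (S v)
      = S (l (T (S v)) w) + S (r (T (S w)) v) := by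
    rcases h with ⟨_, ⟨_, hpl, hpr⟩, _, _⟩ | ⟨_, ⟨_, hpl, hpr⟩, _, _⟩
    · intro v w
      have h1 := hpl (T v) w
      have h2 := hpr (T w) v
      rw [hNT] at h1 h2
      have hs2 := congrArg S (star v w)
      simp only [map_add, map_sub] at h1 h2 hs2
      linear_combination (norm := module) h1 + h2 - hs2
    · intro v w
      have h1 := hpl (T v) w
      have h2 := hpr (T w) v
      rw [hNT] at h1 h2
      have s1 := star v (S w)
      have s2 := star (S v) w
      simp only [map_add, map_sub] at h1 h2 s1 s2
      have h2g : (2:F) • (l (T (S v)) (S w) + r (T (S w)) (S v))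
          = (2:F) • (S (l (T (S v)) w) + S (r (T (S w)) v)) := by
        linear_combination (norm := module) h1 + h2 - s1 - s2
      exact smul_right_injective V (by norm_num : (2:F) ≠ 0) h2g
  have compat : Compatible mul l r T (T ∘ₗ S) := by
    intro k₁ k₂ v w
    have e1 := hT v w
    have e2 := hT (S v) (S w)
    have e3 := hT v (S w)
    have e4 := hT (S v) w
    have hs := congrArg T (star v w)
    have hd := congrArg T (dagger v w)
    simp only [map_add, map_smul, LinearMap.add_apply, LinearMap.smul_apply,
      LinearMap.comp_apply] at e1 e2 e3 e4 hs hd ⊢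
    linear_combination (norm := module) (k₁*k₁) • e1 + (k₂*k₂) • e2 + (k₁*k₂) • e3
      + (k₁*k₂) • e4 - (k₁*k₂) • hs + (k₂*k₂) • hd
  exact ⟨compat, by simpa using compat 1 1⟩
end

section
/- Let (T, N, S) be an O-dual-N structure on a pre-Malcev algebra A with bimodule (V; ℓ, 𝔯), and for k ∈ ℕ set T_k = N^k ∘ T (with T_0 = T). Then every T_k is an O-operator of A associated to (V; ℓ, 𝔯), and for all k, l ∈ ℕ the operators T_k and T_l are compatible. -/
open TensorProduct

/-- Auxiliary quantity `fOp l T S x y = S(l_{Tx} y) - l_{Tx}(S y)`. -/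
def fOp {F : Type*} [Field F] {A : Type*} [AddCommGroup A] [Module F A]
    {V : Type*} [AddCommGroup V] [Module F V]
    (l : A →ₗ[F] Module.End F V) (T : V →ₗ[F] A) (S : V →ₗ[F] V) (x y : V) : V :=
  S (l (T x) y) - l (T x) (S y)

/-- if `(T, N, S)` is an O-dual-N structure, then every `T_k = N^k ∘ T` is
an O-operator and any two of them are compatible. -/
theorem stmt19 {F A V : Type*} [Field F] [CharZero F]
    [AddCommGroup A] [Module F A] [AddCommGroup V] [Module F V]
    (mul : A →ₗ[F] A →ₗ[F] A) (hA : PreMalcevFn fun x y => mul x y)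
    (l r : A →ₗ[F] Module.End F V) (hbim : IsBimodule mul l r)
    (T : V →ₗ[F] A) (N : A →ₗ[F] A) (S : V →ₗ[F] V)
    (h : IsODualNStruct mul l r T N S) :
    (∀ k : ℕ, IsOOp mul l r ((N ^ k) ∘ₗ T))
    ∧ (∀ k m : ℕ, Compatible mul l r ((N ^ k) ∘ₗ T) ((N ^ m) ∘ₗ T)) := by
  obtain ⟨hT, ⟨hNij, hl, hr⟩, hNT, hd⟩ := h
  have hNTp : ∀ v : V, N (T v) = T (S v) := fun v => LinearMap.congr_fun hNT v
  -- commutation of powers of S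
  have hSS : ∀ (n : ℕ) (x : V), (S ^ n) (S x) = S ((S ^ n) x) := by
    intro n x
    show (S ^ n * S) x = (S * S ^ n) x
    rw [← pow_succ, ← pow_succ']
  have hSSij : ∀ (i j : ℕ) (x : V), (S ^ i) ((S ^ j) x) = (S ^ j) ((S ^ i) x) := by
    intro i j x
    show (S ^ i * S ^ j) x = (S ^ j * S ^ i) x
    rw [pow_mul_comm]
  -- N^j ∘ T = T ∘ S^j
  have hTk : ∀ j : ℕ, (N ^ j) ∘ₗ T = T ∘ₗ (S ^ j) := by
    intro j
    induction j with
    | zero => ext v; simp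
    | succ j ih =>
      ext v
      have e1 : (N ^ (j + 1)) (T v) = (N ^ j) (N (T v)) := by rw [pow_succ]; rfl
      have e2 : (S ^ (j + 1)) v = (S ^ j) (S v) := by rw [pow_succ]; rfl
      have e3 := LinearMap.congr_fun ih (S v)
      simp only [LinearMap.comp_apply] at e3 ⊢
      rw [e1, hNTp, e3, e2]
  -- the fundamental relation coming from condition (4)
  have hfg : ∀ x y : V, fOp l T S x y + fOp r T S y x = 0 := by
    intro x y
    have h0 := hd x y
    simp only [dia, diaS, LinearMap.comp_apply, hNTp, map_add] at h0
    simp only [fOp]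
    linear_combination (norm := module) h0
  -- shift property for l, from the dual-Nijenhuis condition
  have hfs : ∀ x y : V, fOp l T S (S x) y = fOp l T S x (S y) := by
    intro x y
    have h0 := hl (T x) y
    rw [hNTp] at h0
    simp only [fOp]
    rw [h0]
    abel
  have hgs : ∀ x y : V, fOp r T S (S x) y = fOp r T S x (S y) := by
    intro x y
    have h0 := hr (T x) y
    rw [hNTp] at h0
    simp only [fOp]
    rw [h0]
    abel
  -- iterated shift
  have hfsk : ∀ (n : ℕ) (x y : V), fOp l T S ((S ^ n) x) y = fOp l T S x ((S ^ n) y) := by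
    intro n
    induction n with
    | zero => intro x y; simp
    | succ n ih =>
      intro x y
      have e1 : (S ^ (n + 1)) x = S ((S ^ n) x) := by rw [pow_succ']; rfl
      have e2 : (S ^ (n + 1)) y = (S ^ n) (S y) := by rw [pow_succ]; rfl
      rw [e1, hfs, ih, ← e2]
  -- the relation hfg shifted by powers of S
  have hF : ∀ (n : ℕ) (x y : V),
      fOp l T S x ((S ^ n) y) + fOp r T S y ((S ^ n) x) = 0 := by
    intro n
    induction n with
    | zero => intro x y; simpa using hfg x y
    | succ n ih =>
      intro x y
      have e1 : (S ^ (n + 1)) y = (S ^ n) (S y) := by rw [pow_succ]; rfl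
      have e2 : (S ^ (n + 1)) x = S ((S ^ n) x) := by rw [pow_succ']; rfl
      rw [e1, e2, ← hgs y ((S ^ n) x)]
      exact ih x (S y)
  -- linearity of fOp in each argument
  have hf1 : ∀ (lr : A →ₗ[F] Module.End F V) (c c' : F) (x x' y : V),
      fOp lr T S (c • x + c' • x') y = c • fOp lr T S x y + c' • fOp lr T S x' y := by
    intro lr c c' x x' y
    simp only [fOp, map_add, map_smul, LinearMap.add_apply, LinearMap.smul_apply, smul_sub]
    abel
  have hf2 : ∀ (lr : A →ₗ[F] Module.End F V) (c c' : F) (x y y' : V),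
      fOp lr T S x (c • y + c' • y') = c • fOp lr T S x y + c' • fOp lr T S x y' := by
    intro lr c c' x y y'
    simp only [fOp, map_add, map_smul, smul_sub]
    abel
  -- the master lemma
  have main : ∀ (c₁ c₂ : F) (k m : ℕ),
      IsOOp mul l r (T ∘ₗ (c₁ • (S ^ k) + c₂ • (S ^ m))) := by
    intro c₁ c₂ k m
    set R : V →ₗ[F] V := c₁ • (S ^ k) + c₂ • (S ^ m) with hR
    have hRw : ∀ x : V, R x = c₁ • (S ^ k) x + c₂ • (S ^ m) x := by
      intro x; rw [hR]; simp
    have hRSa : ∀ (a : ℕ) (x : V), R ((S ^ a) x) = (S ^ a) (R x) := by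
      intro a x
      rw [hRw, hRw, map_add, map_smul, map_smul, hSSij k a, hSSij m a]
    have hfR : ∀ u w : V, fOp l T S (R u) w = fOp l T S u (R w) := by
      intro u w
      rw [hRw u, hRw w, hf1, hf2, hfsk k, hfsk m]
    -- the key identity
    have key : ∀ (a : ℕ) (u v : V),
        (S ^ a) (l (T (R u)) v + r (T (R v)) u)
          = l (T (R u)) ((S ^ a) v) + r (T (R v)) ((S ^ a) u) := by
      intro a
      induction a with
      | zero => intro u v; simp
      | succ a ih =>
        intro u v
        have e1 : (S ^ (a + 1)) (l (T (R u)) v + r (T (R v)) u)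
            = S ((S ^ a) (l (T (R u)) v + r (T (R v)) u)) := by rw [pow_succ']; rfl
        have e2 : (S ^ (a + 1)) v = S ((S ^ a) v) := by rw [pow_succ']; rfl
        have e3 : (S ^ (a + 1)) u = S ((S ^ a) u) := by rw [pow_succ']; rfl
        have c1 : fOp l T S (R u) ((S ^ a) v) + fOp r T S (R v) ((S ^ a) u) = 0 := by
          rw [hfR u ((S ^ a) v), hRSa a v]
          exact hF a u (R v)
        have d1 : S (l (T (R u)) ((S ^ a) v))
            = l (T (R u)) (S ((S ^ a) v)) + fOp l T S (R u) ((S ^ a) v) := by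
          simp only [fOp]; abel
        have d2 : S (r (T (R v)) ((S ^ a) u))
            = r (T (R v)) (S ((S ^ a) u)) + fOp r T S (R v) ((S ^ a) u) := by
          simp only [fOp]; abel
        rw [e1, ih u v, map_add, e2, e3, d1, d2, add_add_add_comm, c1, add_zero]
    -- conclude the O-operator property
    intro v w
    simp only [LinearMap.comp_apply]
    rw [hT (R v) (R w)]
    congr 1
    have k1 := key k v w
    have k2 := key m v w
    have hX : R (l (T (R v)) w + r (T (R w)) v)
        = c₁ • (S ^ k) (l (T (R v)) w + r (T (R w)) v)
          + c₂ • (S ^ m) (l (T (R v)) w + r (T (R w)) v) := hRw _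
    rw [hX, k1, k2]
    generalize T (R v) = xa
    generalize T (R w) = xb
    rw [hRw w, hRw v]
    simp only [map_add, map_smul, smul_add]
    abel
  refine ⟨fun k => ?_, fun k m => ?_⟩
  · have e : (N ^ k) ∘ₗ T = T ∘ₗ ((1 : F) • (S ^ k) + (0 : F) • (S ^ k)) := by
      rw [hTk k, one_smul, zero_smul, add_zero]
    rw [e]
    exact main 1 0 k k
  · intro k₁ k₂
    have e : k₁ • ((N ^ k) ∘ₗ T) + k₂ • ((N ^ m) ∘ₗ T)
        = T ∘ₗ (k₁ • (S ^ k) + k₂ • (S ^ m)) := by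
      rw [hTk k, hTk m]
      ext v
      simp
    rw [e]
    exact main k₁ k₂ k m
end
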